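/- Let C ⊆ {0,1}^n be extremal, let s be a restriction of some concept of C to a domain Y ⊆ {1,...,n}, let B be a maximal cube of C|Y containing s, with dimension set D. Then for any cube B' of C with dim(B') = D, the unique concept h ∈ B' satisfying h|D = s|D also satisfies h|Y = s. (Correctness of the labeled compression scheme.) -/

import Mathlib

variable {n : ℕ}

/-- `S` is shattered by the concept class `C`. -/
def Shatters (C : Set (Fin n → Bool)) (S : Finset (Fin n)) : Prop :=
  ∀ f : Fin n → Bool, ∃ c ∈ C, ∀ x ∈ S, c x = f x

/-- `B` is a cube of `C` with dimension set `S`. -/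
def IsCube (C B : Set (Fin n → Bool)) (S : Finset (Fin n)) : Prop :=
  B ⊆ C ∧ (∀ b ∈ B, ∀ b' ∈ B, ∀ x, x ∉ S → b x = b' x) ∧
    (∀ f : Fin n → Bool, ∃ b ∈ B, ∀ x ∈ S, b x = f x)

/-- `S` is strongly shattered by `C`. -/
def StronglyShatters (C : Set (Fin n → Bool)) (S : Finset (Fin n)) : Prop :=
  ∃ B, IsCube C B S

/-- `C` is extremal: every shattered set is strongly shattered. -/
def Extremal (C : Set (Fin n → Bool)) : Prop :=
  ∀ S, Shatters C S → StronglyShatters C S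

/-- The restriction of a concept to `S` (coordinates outside `S` set to `false`). -/
def restrictF (c : Fin n → Bool) (S : Finset (Fin n)) : Fin n → Bool :=
  fun x => if x ∈ S then c x else false

/-- The restriction `C|S` of a concept class to the coordinate set `S`. -/
def restrictC (C : Set (Fin n → Bool)) (S : Finset (Fin n)) : Set (Fin n → Bool) :=
  (restrictF · S) '' C

lemma cube_face {A W : Set (Fin n → Bool)} {T : Finset (Fin n)} {z : Fin n} {v : Bool}
    (hW : IsCube A W (insert z T)) (hz : z ∉ T) :
    IsCube A {w | w ∈ W ∧ w z = v} T := by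
  obtain ⟨hWA, hWag, hWr⟩ := hW
  refine ⟨fun w hw => hWA hw.1, ?_, ?_⟩
  · intro b hb b' hb' x hx
    by_cases hxz : x = z
    · subst hxz; rw [hb.2, hb'.2]
    · exact hWag b hb.1 b' hb'.1 x (by simp [hxz, hx])
  · intro f
    obtain ⟨w, hw, hwf⟩ := hWr (Function.update f z v)
    refine ⟨w, ⟨hw, ?_⟩, ?_⟩
    · simpa using hwf z (Finset.mem_insert_self z T)
    · intro x hx
      have := hwf x (Finset.mem_insert_of_mem hx)
      have hxz : x ≠ z := by rintro rfl; exact hz hx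
      rwa [Function.update_of_ne hxz] at this

lemma layer_extremal {A : Set (Fin n → Bool)} (hA : Extremal A) (z : Fin n) (v : Bool) :
    Extremal {a | a ∈ A ∧ a z = v} := by
  intro S hS
  have hzS : z ∉ S := by
    intro h
    obtain ⟨c, hc, hcs⟩ := hS (fun _ => !v)
    have := hcs z h
    simp [hc.2] at this
  have hShA : Shatters A S := fun f => by
    obtain ⟨c, hc, h⟩ := hS f; exact ⟨c, hc.1, h⟩
  obtain ⟨Q, hQA, hQag, hQr⟩ := hA S hShA
  obtain ⟨q0, hq0, -⟩ := hQr (fun _ => false)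
  by_cases hq : q0 z = v
  · refine ⟨Q, fun q hq' => ⟨hQA hq', by rw [hQag q hq' q0 hq0 z hzS]; exact hq⟩, hQag, hQr⟩
  · have hq' : q0 z = !v := Bool.eq_not_of_ne hq
    have hSh2 : Shatters A (insert z S) := by
      intro f
      by_cases hf : f z = v
      · obtain ⟨c, hc, h⟩ := hS f
        refine ⟨c, hc.1, fun x hx => ?_⟩
        rcases Finset.mem_insert.1 hx with rfl | hx
        · rw [hc.2, hf]
        · exact h x hx
      · obtain ⟨q, hq1, h⟩ := hQr f
        refine ⟨q, hQA hq1, fun x hx => ?_⟩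
        rcases Finset.mem_insert.1 hx with rfl | hx
        · rw [hQag q hq1 q0 hq0 x hzS, hq', Bool.eq_not_of_ne hf]
        · exact h x hx
    obtain ⟨W, hW⟩ := hA _ hSh2
    obtain ⟨hf1, hf2, hf3⟩ := cube_face (v := v) hW hzS
    exact ⟨_, fun w hw => ⟨hf1 hw, hw.2⟩, hf2, hf3⟩

lemma maximal_cube_unique :
    ∀ (N : ℕ) (A : Set (Fin n → Bool)), A.ncard ≤ N → Extremal A →
      ∀ (B R : Set (Fin n → Bool)) (D : Finset (Fin n)), IsCube A B D →
        (∀ B'' S'', IsCube A B'' S'' → B ⊆ B'' → B = B'') →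
        IsCube A R D → R = B := by
  intro N
  induction N with
  | zero =>
    intro A hcard hA B R D hB hmax hR
    obtain ⟨b0, hb0, -⟩ := hB.2.2 (fun _ => false)
    have : A.Nonempty := ⟨b0, hB.1 hb0⟩
    have := Set.ncard_pos (Set.toFinite A) |>.2 this
    omega
  | succ N ih =>
    intro A hcard hA B R D hB hmax hR
    obtain ⟨b0, hb0, -⟩ := hB.2.2 (fun _ => false)
    obtain ⟨r0, hr0, -⟩ := hR.2.2 (fun _ => false)
    by_contra hRB
    -- find a coordinate z ∉ D where the tails differ
    have hz : ∃ z, z ∉ D ∧ r0 z ≠ b0 z := by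
      by_contra hall
      push_neg at hall
      apply hRB
      ext g
      constructor
      · intro hg
        obtain ⟨b, hbB, hbg⟩ := hB.2.2 g
        have : b = g := by
          funext x
          by_cases hx : x ∈ D
          · exact hbg x hx
          · rw [hB.2.1 b hbB b0 hb0 x hx, ← hall x hx, ← hR.2.1 r0 hr0 g hg x hx]
        exact this ▸ hbB
      · intro hg
        obtain ⟨r, hrR, hrg⟩ := hR.2.2 g
        have : r = g := by
          funext x
          by_cases hx : x ∈ D
          · exact hrg x hx
          · rw [hR.2.1 r hrR r0 hr0 x hx, hall x hx, ← hB.2.1 b0 hb0 g hg x hx]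
        exact this ▸ hrR
    obtain ⟨z, hzD, hzne⟩ := hz
    -- D ∪ {z} is shattered by A
    have hSh : Shatters A (insert z D) := by
      intro f
      by_cases hf : f z = b0 z
      · obtain ⟨b, hbB, hbf⟩ := hB.2.2 f
        refine ⟨b, hB.1 hbB, fun x hx => ?_⟩
        rcases Finset.mem_insert.1 hx with rfl | hx
        · rw [hB.2.1 b hbB b0 hb0 x hzD, hf]
        · exact hbf x hx
      · obtain ⟨r, hrR, hrf⟩ := hR.2.2 f
        refine ⟨r, hR.1 hrR, fun x hx => ?_⟩
        rcases Finset.mem_insert.1 hx with rfl | hx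
        · rw [hR.2.1 r hrR r0 hr0 x hzD, Bool.eq_not_of_ne hzne, Bool.eq_not_of_ne hf]
        · exact hrf x hx
    obtain ⟨W, hW⟩ := hA _ hSh
    have hW0 : IsCube A {w | w ∈ W ∧ w z = b0 z} D := cube_face hW hzD
    by_cases hW0B : {w | w ∈ W ∧ w z = b0 z} = B
    · -- then B ⊆ W, so B = W by maximality, but W has a point with z-value ≠ b0 z
      have hBW : B ⊆ W := by rw [← hW0B]; exact fun w hw => hw.1
      have hBeqW := hmax W (insert z D) hW hBW
      obtain ⟨w, hwW, hwf⟩ := hW.2.2 (fun _ => !(b0 z))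
      have h1 : w z = !(b0 z) := hwf z (Finset.mem_insert_self z D)
      have h2 : w z = b0 z := hB.2.1 w (hBeqW ▸ hwW) b0 hb0 z hzD
      rw [h1] at h2
      simp at h2
    · -- recurse into the layer
      set A' : Set (Fin n → Bool) := {a | a ∈ A ∧ a z = b0 z} with hA'def
      have hA' : Extremal A' := layer_extremal hA z (b0 z)
      have hBA' : IsCube A' B D := by
        refine ⟨fun b hb => ⟨hB.1 hb, hB.2.1 b hb b0 hb0 z hzD⟩, hB.2.1, hB.2.2⟩
      have hmax' : ∀ B'' S'', IsCube A' B'' S'' → B ⊆ B'' → B = B'' := by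
        intro B'' S'' hc hsub
        exact hmax B'' S'' ⟨fun b hb => (hc.1 hb).1, hc.2.1, hc.2.2⟩ hsub
      have hW0A' : IsCube A' {w | w ∈ W ∧ w z = b0 z} D := by
        refine ⟨fun w hw => ⟨hW0.1 hw, hw.2⟩, hW0.2.1, hW0.2.2⟩
      have hlt : A'.ncard ≤ N := by
        have hss : A' ⊂ A := by
          refine ⟨fun a ha => ha.1, fun hsub => ?_⟩
          have : r0 ∈ A' := hsub (hR.1 hr0)
          exact hzne this.2
        have := Set.ncard_lt_ncard hss (Set.toFinite A)
        omega
      exact hW0B (ih A' hlt hA' B _ D hBA' hmax' hW0A')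

lemma restrictF_apply (c : Fin n → Bool) (S : Finset (Fin n)) (x : Fin n) :
    restrictF c S x = if x ∈ S then c x else false := rfl

lemma restrict_extremal {C : Set (Fin n → Bool)} (hC : Extremal C) (Y : Finset (Fin n)) :
    Extremal (restrictC C Y) := by
  intro S hS
  have hSY : ∀ x ∈ S, x ∈ Y := by
    intro x hx
    by_contra hxY
    obtain ⟨c', hc', h⟩ := hS (fun _ => true)
    obtain ⟨c, -, rfl⟩ := hc'
    have := h x hx
    simp only [restrictF_apply, if_neg hxY] at this
    exact Bool.false_ne_true this
  have hShC : Shatters C S := by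
    intro f
    obtain ⟨c', hc', h⟩ := hS f
    obtain ⟨c, hcC, rfl⟩ := hc'
    refine ⟨c, hcC, fun x hx => ?_⟩
    have := h x hx
    simpa only [restrictF_apply, if_pos (hSY x hx)] using this
  obtain ⟨Q, hQC, hQag, hQr⟩ := hC S hShC
  refine ⟨(restrictF · Y) '' Q, Set.image_mono hQC, ?_, ?_⟩
  · rintro b ⟨q, hq, rfl⟩ b' ⟨q', hq', rfl⟩ x hx
    simp only [restrictF_apply]
    split
    · exact hQag q hq q' hq' x hx
    · rfl
  · intro f
    obtain ⟨q, hq, hqf⟩ := hQr f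
    refine ⟨restrictF q Y, Set.mem_image_of_mem _ hq, fun x hx => ?_⟩
    rw [restrictF_apply, if_pos (hSY x hx)]
    exact hqf x hx

/-- Correctness of the labeled compression scheme: if the sample `c|Y` lies in a
maximal cube `B` of `C|Y` with dimension set `D`, then for any cube `B'` of `C`
with dimension set `D`, the concept `h ∈ B'` agreeing with `c` on `D` also
agrees with `c` on all of `Y`. -/
theorem compression_correctness (n : ℕ) (C : Set (Fin n → Bool))
    (Y D : Finset (Fin n)) (B B' : Set (Fin n → Bool)) (c h : Fin n → Bool)
    (hC : Extremal C) (hc : c ∈ C) (hDY : D ⊆ Y)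
    (hB : IsCube (restrictC C Y) B D)
    (hBmax : ∀ B'' S'', IsCube (restrictC C Y) B'' S'' → B ⊆ B'' → B = B'')
    (hsB : restrictF c Y ∈ B)
    (hB' : IsCube C B' D) (hh : h ∈ B') (hagree : ∀ x ∈ D, h x = c x) :
    ∀ x ∈ Y, h x = c x := by
  intro x0 hx0Y
  by_contra hne
  have hx0D : x0 ∉ D := fun hx => hne (hagree x0 hx)
  have hsx0 : restrictF c Y x0 = c x0 := by rw [restrictF_apply, if_pos hx0Y]
  set A := restrictC C Y with hAdef
  have hA : Extremal A := restrict_extremal hC Y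
  -- A shatters D ∪ {x0}
  have hSh : Shatters A (insert x0 D) := by
    intro f
    by_cases hf : f x0 = c x0
    · obtain ⟨b, hbB, hbf⟩ := hB.2.2 f
      refine ⟨b, hB.1 hbB, fun x hx => ?_⟩
      rcases Finset.mem_insert.1 hx with rfl | hx
      · rw [hB.2.1 b hbB _ hsB x hx0D, hsx0, hf]
      · exact hbf x hx
    · obtain ⟨b', hb'B', hb'f⟩ := hB'.2.2 f
      refine ⟨restrictF b' Y, Set.mem_image_of_mem _ (hB'.1 hb'B'), fun x hx => ?_⟩
      rcases Finset.mem_insert.1 hx with rfl | hx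
      · rw [restrictF_apply, if_pos hx0Y, hB'.2.1 b' hb'B' h hh x hx0D,
          Bool.eq_not_of_ne hne, Bool.eq_not_of_ne hf]
      · rw [restrictF_apply, if_pos (hDY hx)]
        exact hb'f x hx
  obtain ⟨W, hW⟩ := hA _ hSh
  have hW0 : IsCube A {w | w ∈ W ∧ w x0 = c x0} D := by
    have := cube_face (v := c x0) hW hx0D
    exact this
  have hW0B : {w | w ∈ W ∧ w x0 = c x0} = B :=
    maximal_cube_unique A.ncard A le_rfl hA B _ D hB hBmax hW0
  have hBW : B ⊆ W := by rw [← hW0B]; exact fun w hw => hw.1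
  have hBeqW := hBmax W (insert x0 D) hW hBW
  obtain ⟨w, hwW, hwf⟩ := hW.2.2 (fun _ => !(c x0))
  have h1 : w x0 = !(c x0) := hwf x0 (Finset.mem_insert_self x0 D)
  have h2 : w x0 = c x0 := by
    rw [hB.2.1 w (hBeqW ▸ hwW) _ hsB x0 hx0D, hsx0]
  rw [h1] at h2
  simp at h2
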